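/- Consider the linear error dynamics e(k+1) = A_K e(k) + w(k) in R^{n_x} with e(0) = 0, where w(0), w(1), ... are independent, identically distributed square-integrable random vectors with zero mean and covariance matrix Sigma^w. Suppose Sigma_inf is a positive definite matrix solving the discrete Lyapunov equation Sigma_inf = A_K Sigma_inf A_K^T + Sigma^w. Then for every p_tilde > 0 and every n >= 0, Pr( e(n)^T Sigma_inf^{-1} e(n) <= p_tilde ) >= 1 - n_x / p_tilde; that is, the ellipsoid {x in R^{n_x} : x^T Sigma_inf^{-1} x <= p_tilde} is a probabilistic reachable set of probability level 1 - n_x/p_tilde for the error process at every time step. -/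

import Mathlib

open MeasureTheory ProbabilityTheory Matrix
open scoped ENNReal

-- aux: product of two L2 functions is integrable
lemma myL2mul {Ω : Type*} [MeasurableSpace Ω] {μ : Measure Ω} {f g : Ω → ℝ}
    (hf : MemLp f 2 μ) (hg : MemLp g 2 μ) :
    Integrable (fun ω => f ω * g ω) μ := by
  have h : (1 : ℝ≥0∞) / 1 = 1 / 2 + 1 / 2 := by
    rw [one_div_one]; exact (ENNReal.add_halves 1).symm
  have := hg.smul (p := 2) (q := 2) (r := 1) hf
  rw [memLp_one_iff_integrable] at this
  convert this using 1
  funext ω; simp [mul_comm]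

-- aux: e n is independent of w n
lemma myIndep {nx : ℕ} {Ω : Type*} [MeasurableSpace Ω] {μ : Measure Ω}
    (A_K : Matrix (Fin nx) (Fin nx) ℝ)
    (w : ℕ → Ω → Fin nx → ℝ) (e : ℕ → Ω → Fin nx → ℝ)
    (hmeas : ∀ k, Measurable (w k))
    (hindep : iIndepFun w μ)
    (he0 : ∀ ω, e 0 ω = 0)
    (hrec : ∀ k ω, e (k + 1) ω = A_K *ᵥ e k ω + w k ω)
    (n : ℕ) : IndepFun (e n) (w n) μ := by
  classical
  have hfact : ∀ m : ℕ, ∃ φ : ((i : (Finset.range m : Finset ℕ)) → (Fin nx → ℝ)) → (Fin nx → ℝ),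
      Measurable φ ∧ ∀ ω, e m ω = φ (fun i => w i.1 ω) := by
    intro m
    induction m with
    | zero => exact ⟨fun _ => 0, measurable_const, fun ω => he0 ω⟩
    | succ k ih =>
      obtain ⟨φ, hφm, hφ⟩ := ih
      refine ⟨fun g => A_K *ᵥ φ (fun i => g ⟨i.1, Finset.mem_range.mpr
          (Nat.lt_succ_of_lt (Finset.mem_range.mp i.2))⟩) + g ⟨k, Finset.self_mem_range_succ k⟩,
        ?_, ?_⟩
      · have hr : Measurable fun (g : (i : (Finset.range (k+1) : Finset ℕ)) → (Fin nx → ℝ)) =>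
            (fun (i : (Finset.range k : Finset ℕ)) => g ⟨i.1, Finset.mem_range.mpr
              (Nat.lt_succ_of_lt (Finset.mem_range.mp i.2))⟩) :=
          measurable_pi_lambda _ fun i => measurable_pi_apply _
        have h1 : Measurable fun (g : (i : (Finset.range (k+1) : Finset ℕ)) → (Fin nx → ℝ)) =>
            A_K *ᵥ φ (fun i => g ⟨i.1, Finset.mem_range.mpr
              (Nat.lt_succ_of_lt (Finset.mem_range.mp i.2))⟩) := by
          refine measurable_pi_lambda _ fun l => ?_
          have : Measurable fun (v : Fin nx → ℝ) => (A_K *ᵥ v) l := by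
            simp only [mulVec, dotProduct]
            exact Finset.measurable_sum _ fun j _ => (measurable_pi_apply j).const_mul _
          exact this.comp (hφm.comp hr)
        exact h1.add (measurable_pi_apply _)
      · intro ω
        rw [hrec k ω, hφ ω]
  obtain ⟨φ, hφm, hφ⟩ := hfact n
  have hD : Disjoint (Finset.range n) ({n} : Finset ℕ) := by
    simp [Finset.disjoint_singleton_right]
  have h := hindep.indepFun_finset (Finset.range n) {n} hD hmeas
  have h2 := h.comp hφm (measurable_pi_apply (⟨n, Finset.mem_singleton_self n⟩ :
    (({n} : Finset ℕ) : Type)))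
  have he : e n = (φ ∘ fun a (i : (Finset.range n : Finset ℕ)) => w i.1 a) := by
    funext ω; exact hφ ω
  have hw : w n = ((fun g => g (⟨n, Finset.mem_singleton_self n⟩ :
      (({n} : Finset ℕ) : Type))) ∘ fun a (i : (({n} : Finset ℕ) : Type)) => w i.1 a) := rfl
  rw [he, hw]
  exact h2


/-- For the linear error dynamics `e (k+1) = A_K ⬝ e k + w k` with `e 0 = 0` and i.i.d.
square-integrable zero-mean disturbances of covariance `Sigmaw`, if the positive definite
matrix `Sigmainf` solves the Lyapunov equation `Sigmainf = A_K * Sigmainf * A_Kᵀ + Sigmaw`,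
then for every `ptilde > 0` and every `n`,
`Pr(e(n)ᵀ Sigmainf⁻¹ e(n) ≤ ptilde) ≥ 1 - nx / ptilde`, i.e. the ellipsoid
`{x | xᵀ Sigmainf⁻¹ x ≤ ptilde}` is a PRS of level `1 - nx / ptilde` at every time step. -/
theorem ellipsoidal_PRS_from_lyapunov
    {nx : ℕ} {Ω : Type*} [MeasurableSpace Ω] (μ : Measure Ω) [IsProbabilityMeasure μ]
    (A_K : Matrix (Fin nx) (Fin nx) ℝ)
    (w : ℕ → Ω → Fin nx → ℝ) (e : ℕ → Ω → Fin nx → ℝ)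
    (hmeas : ∀ k, Measurable (w k))
    (hindep : iIndepFun w μ)
    (hident : ∀ k, Measure.map (w k) μ = Measure.map (w 0) μ)
    (hL2 : ∀ k l, MemLp (fun ω => w k ω l) 2 μ)
    (hmean0 : ∀ k l, (∫ ω, w k ω l ∂μ) = 0)
    (Sigmaw : Matrix (Fin nx) (Fin nx) ℝ)
    (hSigmaw : ∀ k l l', Sigmaw l l' = ∫ ω, w k ω l * w k ω l' ∂μ)
    (he0 : ∀ ω, e 0 ω = 0)
    (hrec : ∀ k ω, e (k + 1) ω = A_K *ᵥ e k ω + w k ω)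
    (Sigmainf : Matrix (Fin nx) (Fin nx) ℝ)
    (hpd : Sigmainf.PosDef)
    (hlyap : Sigmainf = A_K * Sigmainf * A_Kᵀ + Sigmaw) :
    ∀ ptilde : ℝ, 0 < ptilde → ∀ n : ℕ,
      (1 : ℝ) - (nx : ℝ) / ptilde ≤
        (μ {ω | e n ω ⬝ᵥ (Sigmainf⁻¹ *ᵥ e n ω) ≤ ptilde}).toReal := by
  classical
  intro ptilde hp n
  -- measurability of e
  have hemeas : ∀ m, Measurable (e m) := by
    intro m
    induction m with
    | zero => simpa [funext he0] using (measurable_const : Measurable fun _ : Ω => (0 : Fin nx → ℝ))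
    | succ k ih =>
      have : e (k + 1) = fun ω => A_K *ᵥ e k ω + w k ω := funext fun ω => hrec k ω
      rw [this]
      refine Measurable.add ?_ (hmeas k)
      refine measurable_pi_lambda _ fun l => ?_
      simp only [mulVec, dotProduct]
      exact Finset.measurable_sum _ fun j _ =>
        ((measurable_pi_apply j).comp ih).const_mul _
  -- L2 of coordinates of e
  have heL2 : ∀ m l, MemLp (fun ω => e m ω l) 2 μ := by
    intro m
    induction m with
    | zero => intro l; simpa [he0] using memLp_const (μ := μ) (0 : ℝ) (p := 2)
    | succ k ih =>
      intro l
      have : (fun ω => e (k + 1) ω l) =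
          fun ω => (∑ j, A_K l j * e k ω j) + w k ω l := by
        funext ω; rw [hrec k ω]; simp [mulVec, dotProduct]
      rw [this]
      exact (memLp_finset_sum _ fun j _ => (ih j).const_mul _).add (hL2 k l)
  -- integrability of products  
  have hintee : ∀ m l l', Integrable (fun ω => e m ω l * e m ω l') μ :=
    fun m l l' => myL2mul (heL2 m l) (heL2 m l')
  have hintew : ∀ m k l l', Integrable (fun ω => e m ω l * w k ω l') μ :=
    fun m k l l' => myL2mul (heL2 m l) (hL2 k l')
  have hintww : ∀ k l l', Integrable (fun ω => w k ω l * w k ω l') μ :=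
    fun k l l' => myL2mul (hL2 k l) (hL2 k l')
  -- independence and cross terms
  have hI : ∀ m, IndepFun (e m) (w m) μ := myIndep A_K w e hmeas hindep he0 hrec
  have hcross : ∀ m j l', (∫ ω, e m ω j * w m ω l' ∂μ) = 0 := by
    intro m j l'
    have h := (hI m).comp (measurable_pi_apply j) (measurable_pi_apply l')
    have := h.integral_fun_mul_eq_mul_integral (((measurable_pi_apply j).comp (hemeas m)).aestronglyMeasurable)
      (((measurable_pi_apply l').comp (hmeas m)).aestronglyMeasurable)
    simp only [Function.comp_def] at this
    rw [this, hmean0 m l', mul_zero]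
  -- covariance matrices
  set C : ℕ → Matrix (Fin nx) (Fin nx) ℝ :=
    fun m l l' => ∫ ω, e m ω l * e m ω l' ∂μ with hC
  have hC0 : C 0 = 0 := by
    funext l l'; simp [hC, he0]
  have hCrec : ∀ m, C (m + 1) = A_K * C m * A_Kᵀ + Sigmaw := by
    intro m
    have hFL2 : ∀ l, MemLp (fun ω => (A_K *ᵥ e m ω) l) 2 μ := by
      intro l
      simp only [mulVec, dotProduct]
      exact memLp_finset_sum _ fun j _ => (heL2 m j).const_mul _
    funext l l'
    have hint1 : Integrable (fun ω => (A_K *ᵥ e m ω) l * (A_K *ᵥ e m ω) l') μ :=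
      myL2mul (hFL2 l) (hFL2 l')
    have hint2 : Integrable (fun ω => (A_K *ᵥ e m ω) l * w m ω l') μ :=
      myL2mul (hFL2 l) (hL2 m l')
    have hint3 : Integrable (fun ω => w m ω l * (A_K *ᵥ e m ω) l') μ :=
      myL2mul (hL2 m l) (hFL2 l')
    have hint4 : Integrable (fun ω => w m ω l * w m ω l') μ := hintww m l l'
    have key : (fun ω => e (m+1) ω l * e (m+1) ω l') =
        fun ω => (A_K *ᵥ e m ω) l * (A_K *ᵥ e m ω) l'
          + ((A_K *ᵥ e m ω) l * w m ω l'
            + (w m ω l * (A_K *ᵥ e m ω) l' + w m ω l * w m ω l')) := by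
      funext ω; rw [hrec m ω]; simp only [Pi.add_apply]; ring
    have hsplit : C (m+1) l l' = (∫ ω, (A_K *ᵥ e m ω) l * (A_K *ᵥ e m ω) l' ∂μ)
        + ((∫ ω, (A_K *ᵥ e m ω) l * w m ω l' ∂μ)
          + ((∫ ω, w m ω l * (A_K *ᵥ e m ω) l' ∂μ) + ∫ ω, w m ω l * w m ω l' ∂μ)) := by
      have h34 : Integrable (fun ω => w m ω l * (A_K *ᵥ e m ω) l' + w m ω l * w m ω l') μ :=
        hint3.add hint4
      have h234 : Integrable (fun ω => (A_K *ᵥ e m ω) l * w m ω l'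
          + (w m ω l * (A_K *ᵥ e m ω) l' + w m ω l * w m ω l')) μ := hint2.add h34
      show (∫ ω, e (m+1) ω l * e (m+1) ω l' ∂μ) = _
      rw [key, integral_add hint1 h234, integral_add hint2 h34, integral_add hint3 hint4]
    have e1 : (fun ω => (A_K *ᵥ e m ω) l * (A_K *ᵥ e m ω) l') =
        fun ω => ∑ j, ∑ j', (A_K l j * A_K l' j') * (e m ω j * e m ω j') := by
      funext ω
      simp only [mulVec, dotProduct]
      rw [Finset.sum_mul_sum]
      exact Finset.sum_congr rfl fun j _ => Finset.sum_congr rfl fun j' _ => by ring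
    have I1 : (∫ ω, (A_K *ᵥ e m ω) l * (A_K *ᵥ e m ω) l' ∂μ)
        = ∑ j, ∑ j', A_K l j * A_K l' j' * C m j j' := by
      rw [e1, integral_finset_sum _ (fun j _ =>
        integrable_finset_sum _ (fun j' _ => (hintee m j j').const_mul _))]
      refine Finset.sum_congr rfl fun j _ => ?_
      rw [integral_finset_sum _ (fun j' _ => (hintee m j j').const_mul _)]
      exact Finset.sum_congr rfl fun j' _ => integral_const_mul _ _
    have e2 : (fun ω => (A_K *ᵥ e m ω) l * w m ω l') =
        fun ω => ∑ j, A_K l j * (e m ω j * w m ω l') := by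
      funext ω
      simp only [mulVec, dotProduct]
      rw [Finset.sum_mul]
      exact Finset.sum_congr rfl fun j _ => by ring
    have I2 : (∫ ω, (A_K *ᵥ e m ω) l * w m ω l' ∂μ) = 0 := by
      rw [e2, integral_finset_sum _ (fun j _ => (hintew m m j l').const_mul _)]
      refine Finset.sum_eq_zero fun j _ => ?_
      rw [integral_const_mul, hcross m j l', mul_zero]
    have e3 : (fun ω => w m ω l * (A_K *ᵥ e m ω) l') =
        fun ω => ∑ j, A_K l' j * (e m ω j * w m ω l) := by
      funext ω
      simp only [mulVec, dotProduct]
      rw [Finset.mul_sum]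
      exact Finset.sum_congr rfl fun j _ => by ring
    have I3 : (∫ ω, w m ω l * (A_K *ᵥ e m ω) l' ∂μ) = 0 := by
      rw [e3, integral_finset_sum _ (fun j _ => (hintew m m j l).const_mul _)]
      refine Finset.sum_eq_zero fun j _ => ?_
      rw [integral_const_mul, hcross m j l, mul_zero]
    have I4 : (∫ ω, w m ω l * w m ω l' ∂μ) = Sigmaw l l' := (hSigmaw m l l').symm
    have hRHS : (A_K * C m * A_Kᵀ + Sigmaw) l l'
        = (∑ j, ∑ j', A_K l j * A_K l' j' * C m j j') + Sigmaw l l' := by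
      simp only [Matrix.add_apply, Matrix.mul_apply, Matrix.transpose_apply]
      congr 1
      rw [Finset.sum_comm]
      refine Finset.sum_congr rfl fun j _ => ?_
      rw [Finset.sum_mul]
      exact Finset.sum_congr rfl fun j' _ => by ring
    rw [hsplit, I1, I2, I3, I4, hRHS]
    ring
  -- PSD induction
  have hPSD : ∀ m, (Sigmainf - C m).PosSemidef := by
    intro m
    induction m with
    | zero => rw [hC0, sub_zero]; exact hpd.posSemidef
    | succ k ih =>
      have : Sigmainf - C (k + 1) = A_K * (Sigmainf - C k) * A_Kᵀ := by
        rw [hCrec k]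
        nth_rewrite 1 [hlyap]
        noncomm_ring
      rw [this]
      have := ih.mul_mul_conjTranspose_same A_K
      simpa [conjTranspose_eq_transpose_of_trivial] using this
  -- positive definiteness of the inverse
  have hSinv : (Sigmainf⁻¹).PosDef := hpd.inv
  set Q : Ω → ℝ := fun ω => e n ω ⬝ᵥ (Sigmainf⁻¹ *ᵥ e n ω) with hQdef
  have quad_expand : ∀ x : Fin nx → ℝ,
      x ⬝ᵥ (Sigmainf⁻¹ *ᵥ x) = ∑ l, ∑ l', Sigmainf⁻¹ l l' * (x l * x l') := by
    intro x
    simp only [dotProduct, mulVec]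
    refine Finset.sum_congr rfl fun l _ => ?_
    rw [Finset.mul_sum]
    exact Finset.sum_congr rfl fun l' _ => by ring
  have quadnn : ∀ x : Fin nx → ℝ, 0 ≤ ∑ l, ∑ l', Sigmainf⁻¹ l l' * (x l * x l') := by
    intro x
    have h := hSinv.posSemidef.dotProduct_mulVec_nonneg x
    rwa [star_trivial, quad_expand] at h
  have hQeq : Q = fun ω => ∑ l, ∑ l', Sigmainf⁻¹ l l' * (e n ω l * e n ω l') := by
    funext ω; exact quad_expand (e n ω)
  have hQint : Integrable Q μ := by
    rw [hQeq]
    exact integrable_finset_sum _ fun l _ =>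
      integrable_finset_sum _ fun l' _ => (hintee n l l').const_mul _
  have hQnn : ∀ ω, 0 ≤ Q ω := fun ω => by rw [hQeq]; exact quadnn (e n ω)
  have hQval : ∫ ω, Q ω ∂μ = ∑ l, ∑ l', Sigmainf⁻¹ l l' * C n l l' := by
    simp only [hQeq]
    rw [integral_finset_sum _ (fun l _ =>
      integrable_finset_sum _ (fun l' _ => (hintee n l l').const_mul (Sigmainf⁻¹ l l')))]
    refine Finset.sum_congr rfl fun l _ => ?_
    rw [integral_finset_sum _ (fun l' _ => (hintee n l l').const_mul (Sigmainf⁻¹ l l'))]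
    exact Finset.sum_congr rfl fun l' _ => integral_const_mul _ _
  -- trace identity
  have hsym : ∀ i j : Fin nx, Sigmainf j i = Sigmainf i j := by
    intro i j
    conv_lhs => rw [← hpd.1]
    simp [conjTranspose_apply]
  have htr : ∑ l, ∑ l', Sigmainf⁻¹ l l' * Sigmainf l l' = (nx : ℝ) := by
    have h1 : Sigmainf⁻¹ * Sigmainf = 1 :=
      Matrix.nonsing_inv_mul _ (isUnit_iff_ne_zero.mpr hpd.det_pos.ne')
    have h2 : ∑ l, ∑ l', Sigmainf⁻¹ l l' * Sigmainf l l'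
        = ∑ l : Fin nx, (Sigmainf⁻¹ * Sigmainf) l l := by
      refine Finset.sum_congr rfl fun l _ => ?_
      rw [Matrix.mul_apply]
      exact Finset.sum_congr rfl fun l' _ => by rw [hsym l l']
    rw [h2, h1]
    simp [Matrix.one_apply]
  -- trace of the PSD difference is nonnegative
  obtain ⟨B, hB⟩ : ∃ B : Matrix (Fin nx) (Fin nx) ℝ, Sigmainf - C n = Bᴴ * B := by
    open scoped MatrixOrder in
    obtain ⟨B, hB⟩ := CStarAlgebra.nonneg_iff_eq_star_mul_self.mp (hPSD n).nonneg
    exact ⟨B, hB⟩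
  have hTnn : 0 ≤ ∑ l, ∑ l', Sigmainf⁻¹ l l' * (Sigmainf - C n) l l' := by
    rw [hB]
    have step1 : ∑ l, ∑ l', Sigmainf⁻¹ l l' * (Bᴴ * B) l l'
        = ∑ l, ∑ l', ∑ j, Sigmainf⁻¹ l l' * (B j l * B j l') := by
      refine Finset.sum_congr rfl fun l _ => Finset.sum_congr rfl fun l' _ => ?_
      rw [Matrix.mul_apply, Finset.mul_sum]
      refine Finset.sum_congr rfl fun j _ => ?_
      simp only [conjTranspose_apply, star_trivial]
    rw [step1]
    have step2 : ∑ l, ∑ l', ∑ j, Sigmainf⁻¹ l l' * (B j l * B j l')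
        = ∑ j, ∑ l, ∑ l', Sigmainf⁻¹ l l' * (B j l * B j l') := by
      rw [show (∑ l : Fin nx, ∑ l' : Fin nx, ∑ j : Fin nx,
          Sigmainf⁻¹ l l' * (B j l * B j l'))
          = ∑ l : Fin nx, ∑ j : Fin nx, ∑ l' : Fin nx,
            Sigmainf⁻¹ l l' * (B j l * B j l')
        from Finset.sum_congr rfl fun l _ => Finset.sum_comm]
      exact Finset.sum_comm
    rw [step2]
    exact Finset.sum_nonneg fun j _ => quadnn fun l => B j l
  -- expectation bound
  have hle : ∫ ω, Q ω ∂μ ≤ (nx : ℝ) := by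
    have lin : ∑ l, ∑ l', Sigmainf⁻¹ l l' * (Sigmainf - C n) l l'
        = (∑ l, ∑ l', Sigmainf⁻¹ l l' * Sigmainf l l')
          - ∑ l, ∑ l', Sigmainf⁻¹ l l' * C n l l' := by
      simp [Matrix.sub_apply, mul_sub, Finset.sum_sub_distrib]
    rw [hQval]
    rw [lin, htr] at hTnn
    linarith
  -- Markov inequality
  have hmark := mul_meas_ge_le_integral_of_nonneg (μ := μ)
    (ae_of_all μ hQnn) hQint ptilde
  have hmark2 : (μ {ω | ptilde ≤ Q ω}).toReal ≤ (nx : ℝ) / ptilde := by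
    rw [le_div_iff₀ hp]
    calc (μ {ω | ptilde ≤ Q ω}).toReal * ptilde
        = ptilde * (μ {ω | ptilde ≤ Q ω}).toReal := mul_comm _ _
      _ ≤ ∫ ω, Q ω ∂μ := hmark
      _ ≤ (nx : ℝ) := hle
  -- union bound
  have hone : (1 : ℝ) ≤ (μ {ω | Q ω ≤ ptilde}).toReal + (μ {ω | ptilde ≤ Q ω}).toReal := by
    have hU : (Set.univ : Set Ω) ⊆ {ω | Q ω ≤ ptilde} ∪ {ω | ptilde ≤ Q ω} := by
      intro ω _
      rcases le_total (Q ω) ptilde with h | h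
      · exact Or.inl h
      · exact Or.inr h
    have h2 : (1 : ℝ≥0∞) ≤ μ {ω | Q ω ≤ ptilde} + μ {ω | ptilde ≤ Q ω} := by
      calc (1 : ℝ≥0∞) = μ Set.univ := (measure_univ (μ := μ)).symm
        _ ≤ μ ({ω | Q ω ≤ ptilde} ∪ {ω | ptilde ≤ Q ω}) := measure_mono hU
        _ ≤ _ := measure_union_le _ _
    have h3 := ENNReal.toReal_mono
      (by finiteness : μ {ω | Q ω ≤ ptilde} + μ {ω | ptilde ≤ Q ω} ≠ ⊤) h2
    rwa [ENNReal.toReal_one, ENNReal.toReal_add (measure_ne_top μ _) (measure_ne_top μ _)] at h3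
  calc (1 : ℝ) - (nx : ℝ) / ptilde
      ≤ 1 - (μ {ω | ptilde ≤ Q ω}).toReal := by linarith
    _ ≤ (μ {ω | Q ω ≤ ptilde}).toReal := by linarith
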